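/- arXiv:2603.28572 — 2 statements merged into one kernel-verified Lean document; each statement's English description precedes it below -/
import Mathlib

section
/- Let $g_i \sim \mathrm{Gamma}(a,1)$ and $g_j \sim \mathrm{Gamma}(1,1)$ (i.e., exponential with rate 1) for $j \neq i$, all independent, with $K$ variables total. Then the probability that $g_i$ is the maximum equals $\sum_{k=0}^{K-1} \frac{(-1)^k \binom{K-1}{k}}{(k+1)^{a}}$. -/
open MeasureTheory ProbabilityTheory
open Real Set
open scoped ENNReal

lemma intPDF {a r : ℝ} (ha : 0 < a) (hr : 0 < r) :
    Integrable (gammaPDFReal a r) ∧ ∫ x, gammaPDFReal a r x = 1 := by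
  have hnn : ∀ x, 0 ≤ gammaPDFReal a r x := gammaPDFReal_nonneg ha hr
  have hm := measurable_gammaPDFReal a r
  have hl : ∫⁻ x, ENNReal.ofReal (gammaPDFReal a r x) = 1 := lintegral_gammaPDF_eq_one ha hr
  have hint : Integrable (gammaPDFReal a r) := by
    refine ⟨hm.aestronglyMeasurable, ?_⟩
    rw [hasFiniteIntegral_iff_ofReal (ae_of_all _ hnn), hl]
    exact ENNReal.one_lt_top
  refine ⟨hint, ?_⟩
  have := ofReal_integral_eq_lintegral_ofReal hint (ae_of_all _ hnn)
  rw [hl] at this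
  have h2 : (0:ℝ) ≤ ∫ x, gammaPDFReal a r x := integral_nonneg hnn
  have := congrArg ENNReal.toReal this
  rwa [ENNReal.toReal_ofReal h2, ENNReal.toReal_one] at this

-- key pointwise identity
lemma fk_eq {a : ℝ} (ha : 0 < a) (k : ℕ) (x : ℝ) :
    exp (-x) ^ k * gammaPDFReal a 1 x
      = ((k : ℝ) + 1) ^ (-a) * gammaPDFReal a ((k : ℝ) + 1) x := by
  have hk1 : (0:ℝ) < (k:ℝ) + 1 := by positivity
  unfold gammaPDFReal
  split_ifs with h
  · rw [← Real.exp_nat_mul]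
    rw [Real.rpow_neg hk1.le]
    rw [Real.one_rpow]
    field_simp
    rw [show -(↑k * x) = -((↑k+1)*x) + x by ring, Real.exp_add]
    ring_nf
    have hx1 : rexp x * rexp (-x) = 1 := by rw [← Real.exp_add]; simp
    linear_combination (rexp (-(↑k * x) - x) * x ^ (-1 + a)) * hx1
  · ring

lemma intFk {a : ℝ} (ha : 0 < a) (k : ℕ) :
    Integrable (fun x => exp (-x) ^ k * gammaPDFReal a 1 x) ∧
    ∫ x, exp (-x) ^ k * gammaPDFReal a 1 x = ((k : ℝ) + 1) ^ (-a) := by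
  have hk1 : (0:ℝ) < (k:ℝ) + 1 := by positivity
  have h := funext (fk_eq ha k)
  constructor
  · rw [h]
    exact ((intPDF ha hk1).1).const_mul _
  · rw [h]
    rw [integral_const_mul, (intPDF ha hk1).2, mul_one]

lemma expIic (x : ℝ) : expMeasure 1 (Iic x) =
    ENNReal.ofReal (if 0 ≤ x then 1 - exp (-x) else 0) := by
  rw [expMeasure, gammaMeasure, withDensity_apply _ measurableSet_Iic]
  have h : (gammaPDF 1 1 : ℝ → ℝ≥0∞) = exponentialPDF 1 := rfl
  rw [h, lintegral_exponentialPDF_eq_antiDeriv one_pos x]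
  simp

lemma mainInt {a : ℝ} (ha : 0 < a) (n : ℕ) :
    ∫⁻ x, (ENNReal.ofReal (if 0 ≤ x then 1 - exp (-x) else 0)) ^ n ∂(gammaMeasure a 1)
      = ENNReal.ofReal (∑ k ∈ Finset.range (n+1),
          (-1:ℝ)^k * (n.choose k : ℝ) / ((k:ℝ)+1)^a) := by
  set c : ℝ → ℝ := fun x => if 0 ≤ x then 1 - exp (-x) else 0 with hc
  have hc0 : ∀ x, 0 ≤ c x := by
    intro x; simp only [hc]; split_ifs with h
    · have : rexp (-x) ≤ 1 := Real.exp_le_one_iff.2 (by linarith)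
      linarith
    · exact le_refl 0
  have hc1 : ∀ x, c x ≤ 1 := by
    intro x; simp only [hc]; split_ifs with h
    · have := Real.exp_pos (-x); linarith
    · linarith
  have hcm : Measurable c := Measurable.ite measurableSet_Ici (by fun_prop) measurable_const
  have hpnn : ∀ x, 0 ≤ gammaPDFReal a 1 x := gammaPDFReal_nonneg ha one_pos
  have hpm : Measurable (gammaPDF a 1) := (measurable_gammaPDFReal a 1).ennreal_ofReal
  change ∫⁻ x, (ENNReal.ofReal (c x)) ^ n ∂(gammaMeasure a 1) = _
  rw [gammaMeasure, lintegral_withDensity_eq_lintegral_mul _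
    hpm (hcm.ennreal_ofReal.pow_const n)]
  have hpt : ∀ x, (gammaPDF a 1 * fun x => (ENNReal.ofReal (c x)) ^ n) x
      = ENNReal.ofReal (gammaPDFReal a 1 x * c x ^ n) := by
    intro x
    rw [Pi.mul_apply]
    show ENNReal.ofReal (gammaPDFReal a 1 x) * (ENNReal.ofReal (c x)) ^ n = _
    rw [← ENNReal.ofReal_pow (hc0 x), ← ENNReal.ofReal_mul (hpnn x)]
  rw [lintegral_congr hpt]
  have hint : Integrable (fun x => gammaPDFReal a 1 x * c x ^ n) := by
    refine ((intPDF ha one_pos).1).mono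
      (((measurable_gammaPDFReal a 1).mul (hcm.pow_const n)).aestronglyMeasurable)
      (ae_of_all _ fun x => ?_)
    rw [Real.norm_eq_abs, Real.norm_eq_abs, abs_of_nonneg (hpnn x),
      abs_of_nonneg (mul_nonneg (hpnn x) (pow_nonneg (hc0 x) n))]
    calc gammaPDFReal a 1 x * c x ^ n ≤ gammaPDFReal a 1 x * 1 :=
          mul_le_mul_of_nonneg_left (pow_le_one₀ (hc0 x) (hc1 x)) (hpnn x)
      _ = gammaPDFReal a 1 x := mul_one _
  rw [← ofReal_integral_eq_lintegral_ofReal hint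
    (ae_of_all _ fun x => mul_nonneg (hpnn x) (pow_nonneg (hc0 x) n))]
  congr 1
  have hexp : (fun x => gammaPDFReal a 1 x * c x ^ n)
      = fun x => ∑ k ∈ Finset.range (n+1),
          ((-1:ℝ)^k * (n.choose k : ℝ)) * (exp (-x) ^ k * gammaPDFReal a 1 x) := by
    funext x
    by_cases hx : 0 ≤ x
    · have hcx : c x = -exp (-x) + 1 := by simp only [hc, if_pos hx]; ring
      rw [hcx, add_pow, Finset.mul_sum]
      refine Finset.sum_congr rfl fun k hk => ?_
      rw [neg_pow]
      ring
    · have hpdf : gammaPDFReal a 1 x = 0 := by unfold gammaPDFReal; rw [if_neg hx]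
      simp [hpdf]
  rw [hexp, integral_finset_sum _ (fun k _ => ((intFk ha k).1).const_mul _)]
  refine Finset.sum_congr rfl fun k hk => ?_
  rw [integral_const_mul, (intFk ha k).2, Real.rpow_neg (by positivity), div_eq_mul_inv]


/-- Let `g i ~ Gamma(a,1)` and `g j ~ Gamma(1,1)` (exponential with rate 1)
for `j ≠ i`, all independent (`K` variables in total). Then the probability
that `g i` is the maximum equals `∑_{k=0}^{K-1} (-1)^k (K-1 choose k) / (k+1)^a`. -/
theorem prob_gamma_is_max {Ω : Type*} [MeasurableSpace Ω]
    (μ : Measure Ω) [IsProbabilityMeasure μ]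
    {K : ℕ} (hK : 1 ≤ K) (a : ℝ) (ha : 0 < a)
    (g : Fin K → Ω → ℝ) (hmeas : ∀ j, Measurable (g j))
    (hindep : iIndepFun g μ)
    (i : Fin K)
    (hgi : Measure.map (g i) μ = gammaMeasure a 1)
    (hgj : ∀ j, j ≠ i → Measure.map (g j) μ = expMeasure 1) :
    μ {ω | ∀ j, g j ω ≤ g i ω} =
      ENNReal.ofReal
        (∑ k ∈ Finset.range K,
          (-1 : ℝ) ^ k * ((K - 1).choose k : ℝ) / ((k : ℝ) + 1) ^ a) := by
  classical
  set T : Finset (Fin K) := {i}ᶜ with hT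
  set Y : Ω → (↥T → ℝ) := fun ω j => g j ω with hY
  have hYm : Measurable Y := measurable_pi_lambda _ fun j => hmeas j
  have hind2 : IndepFun (g i) Y μ := by
    have h := hindep.indepFun_finset {i} T (by simp [hT]) hmeas
    exact h.comp (measurable_pi_apply (⟨i, Finset.mem_singleton_self i⟩ : ({i} : Finset (Fin K))))
      measurable_id
  haveI : IsProbabilityMeasure (μ.map Y) := Measure.isProbabilityMeasure_map hYm.aemeasurable
  have hprodmap : μ.map (fun ω => (g i ω, Y ω)) = (gammaMeasure a 1).prod (μ.map Y) := by
    rw [← hgi]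
    exact (indepFun_iff_map_prod_eq_prod_map_map (hmeas i).aemeasurable hYm.aemeasurable).1 hind2
  set B : Set (ℝ × (↥T → ℝ)) := {p | ∀ j, p.2 j ≤ p.1} with hB
  have hBm : MeasurableSet B := by
    have hBe : B = ⋂ j, {p : ℝ × (↥T → ℝ) | p.2 j ≤ p.1} := by ext p; simp [hB]
    rw [hBe]
    exact MeasurableSet.iInter fun j => measurableSet_le (by fun_prop) (by fun_prop)
  have hA : {ω | ∀ j, g j ω ≤ g i ω} = (fun ω => (g i ω, Y ω)) ⁻¹' B := by
    ext ω
    simp only [Set.mem_setOf_eq, Set.mem_preimage, hB, hY]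
    constructor
    · intro h j; exact h j
    · intro h j
      by_cases hj : j = i
      · subst hj; exact le_refl _
      · exact h ⟨j, by simp [hT, hj]⟩
  rw [hA, ← Measure.map_apply ((hmeas i).prodMk hYm) hBm, hprodmap]
  haveI : IsProbabilityMeasure (gammaMeasure a 1) := isProbabilityMeasure_gammaMeasure ha one_pos
  rw [Measure.prod_apply hBm]
  have hinner : ∀ x : ℝ, (μ.map Y) (Prod.mk x ⁻¹' B)
      = (ENNReal.ofReal (if 0 ≤ x then 1 - exp (-x) else 0)) ^ (K - 1) := by
    intro x
    rw [Measure.map_apply hYm (measurable_prodMk_left hBm)]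
    set s : Fin K → Set Ω := fun j => if j = i then Set.univ else g j ⁻¹' Iic x with hs
    have hYpre : Y ⁻¹' (Prod.mk x ⁻¹' B) = ⋂ j, s j := by
      ext ω
      simp only [Set.mem_preimage, Set.mem_iInter, hB, hY, Set.mem_setOf_eq, hs]
      constructor
      · intro h j
        by_cases hj : j = i
        · simp [hj]
        · simpa [hj] using h ⟨j, by simp [hT, hj]⟩
      · intro h j
        have h2 := h j.1
        have hj : (j : Fin K) ≠ i := by
          have h3 := j.2
          simp only [hT, Finset.mem_compl, Finset.mem_singleton] at h3
          exact h3
        simpa [hj] using h2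
    rw [hYpre, hindep.meas_iInter (fun j => ?_)]
    · have hval : ∀ j, μ (s j) = if j = i then 1
          else ENNReal.ofReal (if 0 ≤ x then 1 - exp (-x) else 0) := by
        intro j
        by_cases hj : j = i
        · simp [hs, hj]
        · simp only [hs, if_neg hj]
          rw [← Measure.map_apply (hmeas j) measurableSet_Iic, hgj j hj, expIic]
      rw [Finset.prod_congr rfl (fun j _ => hval j),
        ← Finset.mul_prod_erase Finset.univ _ (Finset.mem_univ i), if_pos rfl, one_mul,
        Finset.prod_congr rfl (fun j hj => if_neg (Finset.ne_of_mem_erase hj)),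
        Finset.prod_const, Finset.card_erase_of_mem (Finset.mem_univ i),
        Finset.card_univ, Fintype.card_fin]
    · by_cases hj : j = i
      · simp only [hs, if_pos hj]
        exact MeasurableSet.univ
      · simp only [hs, if_neg hj]
        exact ⟨Iic x, measurableSet_Iic, rfl⟩
  rw [lintegral_congr hinner, mainInt ha (K - 1), Nat.sub_add_cancel hK]
end

section
/- Let $P_v(a, K) = \sum_{k=0}^{K-1} \frac{(-1)^k \binom{K-1}{k}}{(k+1)^{a}}$ for real $a > 0$ and integer $K \geq 1$. Then $P_v(a,K) \in [0,1]$, $P_v(a, K) \to 1$ as $a \to \infty$ (for fixed $K$), and $P_v$ is monotone nondecreasing in $a$. -/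
open Filter MeasureTheory Real Set

section VoronoiAux

private lemma vp_intOn {c : ℝ} (r : ℝ) (hc : 0 < c) (hr : 0 < r) :
    IntegrableOn (fun t : ℝ => t ^ (c - 1) * Real.exp (-(r * t))) (Set.Ioi 0) := by
  have h := integrableOn_rpow_mul_exp_neg_mul_rpow (p := 1) (s := c - 1) (b := r)
    (by linarith) one_pos hr
  simpa [Real.rpow_one, neg_mul] using h

private lemma vp_intF {c : ℝ} (hc : 0 < c) :
    IntegrableOn (fun t : ℝ => t ^ (c - 1) * Real.exp (-t)) (Set.Ioi 0) := by
  simpa using vp_intOn 1 hc one_pos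

private lemma vp_meas (n : ℕ) (c : ℝ) :
    Measurable (fun t : ℝ => (1 - Real.exp (-t)) ^ n * (t ^ (c - 1) * Real.exp (-t))) := by
  have h1 : Measurable fun t : ℝ => (1 - Real.exp (-t)) ^ n :=
    ((continuous_const.sub (Real.continuous_exp.comp continuous_neg)).pow n).measurable
  have h2 : Measurable fun t : ℝ => t ^ (c - 1) := by measurability
  have h3 : Measurable fun t : ℝ => Real.exp (-t) :=
    (Real.continuous_exp.comp continuous_neg).measurable
  exact h1.mul (h2.mul h3)

private lemma vp_H_nonneg (n : ℕ) {t : ℝ} (ht : 0 < t) :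
    0 ≤ (1 - Real.exp (-t)) ^ n := by
  have : Real.exp (-t) ≤ 1 := Real.exp_le_one_iff.mpr (by linarith)
  exact pow_nonneg (by linarith) n

private lemma vp_H_le_one (n : ℕ) {t : ℝ} (ht : 0 < t) :
    (1 - Real.exp (-t)) ^ n ≤ 1 := by
  have h1 : Real.exp (-t) ≤ 1 := Real.exp_le_one_iff.mpr (by linarith)
  have h2 : 0 < Real.exp (-t) := Real.exp_pos _
  exact pow_le_one₀ (by linarith) (by linarith)

private lemma vp_intHF (n : ℕ) {c : ℝ} (hc : 0 < c) :
    IntegrableOn (fun t : ℝ => (1 - Real.exp (-t)) ^ n * (t ^ (c - 1) * Real.exp (-t)))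
      (Set.Ioi 0) := by
  refine Integrable.mono' (vp_intF hc) ((vp_meas n c).aestronglyMeasurable) ?_
  refine (ae_restrict_iff' measurableSet_Ioi).2 (ae_of_all _ fun t ht => ?_)
  have ht' : (0:ℝ) < t := ht
  have hF : 0 ≤ t ^ (c - 1) * Real.exp (-t) := by positivity
  rw [Real.norm_eq_abs, abs_mul, abs_of_nonneg (vp_H_nonneg n ht'), abs_of_nonneg hF]
  calc (1 - Real.exp (-t)) ^ n * (t ^ (c - 1) * Real.exp (-t))
      ≤ 1 * (t ^ (c - 1) * Real.exp (-t)) :=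
        mul_le_mul_of_nonneg_right (vp_H_le_one n ht') hF
    _ = t ^ (c - 1) * Real.exp (-t) := one_mul _

private lemma vp_Gamma_eq {c : ℝ} (hc : 0 < c) :
    ∫ t in Set.Ioi 0, t ^ (c - 1) * Real.exp (-t) = Real.Gamma c := by
  rw [Real.Gamma_eq_integral hc]
  exact setIntegral_congr_fun measurableSet_Ioi fun t _ => mul_comm _ _

/-- Binomial expansion of the integrand. -/
private lemma vp_key (n : ℕ) (a t : ℝ) :
    (1 - Real.exp (-t)) ^ n * (t ^ (a - 1) * Real.exp (-t)) =
      ∑ k ∈ Finset.range (n + 1),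
        ((-1 : ℝ) ^ k * (n.choose k : ℝ)) * (t ^ (a - 1) * Real.exp (-(((k : ℝ) + 1) * t))) := by
  have h1 : (1 - Real.exp (-t)) = (-Real.exp (-t)) + 1 := by ring
  rw [h1, add_pow, Finset.sum_mul]
  refine Finset.sum_congr rfl fun k hk => ?_
  have h2 : (-Real.exp (-t)) ^ k = (-1 : ℝ) ^ k * Real.exp (-t) ^ k := by
    rw [neg_pow]
  have h3 : Real.exp (-t) ^ k = Real.exp ((k : ℝ) * (-t)) := (Real.exp_nat_mul _ _).symm
  have h4 : Real.exp ((k : ℝ) * (-t)) * Real.exp (-t) = Real.exp (-(((k : ℝ) + 1) * t)) := by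
    rw [← Real.exp_add]; congr 1; ring
  rw [h2, h3, one_pow, ← h4]
  ring

private lemma vp_J_eq (n : ℕ) {a : ℝ} (ha : 0 < a) :
    ∫ t in Set.Ioi 0, (1 - Real.exp (-t)) ^ n * (t ^ (a - 1) * Real.exp (-t)) =
      Real.Gamma a *
        ∑ k ∈ Finset.range (n + 1), (-1 : ℝ) ^ k * (n.choose k : ℝ) / ((k : ℝ) + 1) ^ a := by
  rw [setIntegral_congr_fun measurableSet_Ioi (fun t _ => vp_key n a t)]
  have hsum := integral_finset_sum (μ := volume.restrict (Set.Ioi 0)) (Finset.range (n + 1))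
    (f := fun k (t : ℝ) => ((-1 : ℝ) ^ k * (n.choose k : ℝ)) *
      (t ^ (a - 1) * Real.exp (-(((k : ℝ) + 1) * t))))
    (fun k _ => ((vp_intOn ((k : ℝ) + 1) ha (by positivity)).const_mul _))
  rw [hsum, Finset.mul_sum]
  refine Finset.sum_congr rfl fun k hk => ?_
  beta_reduce
  rw [integral_const_mul, integral_rpow_mul_exp_neg_mul_Ioi ha (by positivity : (0:ℝ) < (k:ℝ)+1)]
  have h5 : ((1 : ℝ) / ((k : ℝ) + 1)) ^ a = 1 / ((k : ℝ) + 1) ^ a := by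
    rw [Real.div_rpow zero_le_one (by positivity), Real.one_rpow]
  have hne : ((k : ℝ) + 1) ^ a ≠ 0 := by positivity
  rw [h5]
  field_simp

/-- Chebyshev-type correlation inequality for integrals. -/
private lemma vp_cheb {μ : Measure ℝ} [SFinite μ] {f g w : ℝ → ℝ}
    (h2 : Integrable (fun t => f t * w t) μ) (h3 : Integrable (fun t => g t * w t) μ)
    (h4 : Integrable (fun t => f t * g t * w t) μ) (h1 : Integrable w μ)
    (hpos : ∀ᵐ z ∂(μ.prod μ), 0 ≤ (f z.1 - f z.2) * (g z.1 - g z.2) * (w z.1 * w z.2)) :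
    (∫ t, f t * w t ∂μ) * (∫ t, g t * w t ∂μ) ≤
      (∫ t, f t * g t * w t ∂μ) * (∫ t, w t ∂μ) := by
  have P1 : Integrable (fun z : ℝ × ℝ => f z.1 * g z.1 * w z.1 * w z.2) (μ.prod μ) :=
    h4.mul_prod h1
  have P2 : Integrable (fun z : ℝ × ℝ => w z.1 * (f z.2 * g z.2 * w z.2)) (μ.prod μ) :=
    h1.mul_prod h4
  have P3 : Integrable (fun z : ℝ × ℝ => f z.1 * w z.1 * (g z.2 * w z.2)) (μ.prod μ) :=
    h2.mul_prod h3
  have P4 : Integrable (fun z : ℝ × ℝ => g z.1 * w z.1 * (f z.2 * w z.2)) (μ.prod μ) :=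
    h3.mul_prod h2
  have hmono : (∫ z : ℝ × ℝ, (f z.1 * w z.1 * (g z.2 * w z.2) +
        g z.1 * w z.1 * (f z.2 * w z.2)) ∂μ.prod μ) ≤
      ∫ z : ℝ × ℝ, (f z.1 * g z.1 * w z.1 * w z.2 + w z.1 * (f z.2 * g z.2 * w z.2)) ∂μ.prod μ := by
    refine integral_mono_ae (P3.add P4) (P1.add P2) ?_
    refine hpos.mono fun z hz => ?_
    show f z.1 * w z.1 * (g z.2 * w z.2) + g z.1 * w z.1 * (f z.2 * w z.2) ≤
      f z.1 * g z.1 * w z.1 * w z.2 + w z.1 * (f z.2 * g z.2 * w z.2)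
    have hid : (f z.1 - f z.2) * (g z.1 - g z.2) * (w z.1 * w z.2) =
        f z.1 * g z.1 * w z.1 * w z.2 + w z.1 * (f z.2 * g z.2 * w z.2) -
          f z.1 * w z.1 * (g z.2 * w z.2) - g z.1 * w z.1 * (f z.2 * w z.2) := by ring
    rw [hid] at hz
    linarith
  have eA : (∫ z : ℝ × ℝ, (f z.1 * g z.1 * w z.1 * w z.2 +
        w z.1 * (f z.2 * g z.2 * w z.2)) ∂μ.prod μ) =
      (∫ t, f t * g t * w t ∂μ) * (∫ t, w t ∂μ) +
        (∫ t, w t ∂μ) * (∫ t, f t * g t * w t ∂μ) := by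
    rw [integral_add P1 P2]
    congr 1
    · exact integral_prod_mul (fun t => f t * g t * w t) w
    · exact integral_prod_mul w (fun t => f t * g t * w t)
  have eB : (∫ z : ℝ × ℝ, (f z.1 * w z.1 * (g z.2 * w z.2) +
        g z.1 * w z.1 * (f z.2 * w z.2)) ∂μ.prod μ) =
      (∫ t, f t * w t ∂μ) * (∫ t, g t * w t ∂μ) +
        (∫ t, g t * w t ∂μ) * (∫ t, f t * w t ∂μ) := by
    rw [integral_add P3 P4]
    congr 1
    · exact integral_prod_mul (fun t => f t * w t) (fun t => g t * w t)
    · exact integral_prod_mul (fun t => g t * w t) (fun t => f t * w t)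
  rw [eA, eB] at hmono
  nlinarith [hmono, mul_comm (∫ t, f t * w t ∂μ) (∫ t, g t * w t ∂μ),
    mul_comm (∫ t, f t * g t * w t ∂μ) (∫ t, w t ∂μ)]

private lemma vp_mono_step (n : ℕ) {a b : ℝ} (ha : 0 < a) (hab : a ≤ b) :
    (∫ t in Set.Ioi 0, (1 - Real.exp (-t)) ^ n * (t ^ (a - 1) * Real.exp (-t))) *
        Real.Gamma b ≤
      (∫ t in Set.Ioi 0, (1 - Real.exp (-t)) ^ n * (t ^ (b - 1) * Real.exp (-t))) *
        Real.Gamma a := by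
  have hb : 0 < b := lt_of_lt_of_le ha hab
  set μ : Measure ℝ := volume.restrict (Set.Ioi 0) with hμ
  set f : ℝ → ℝ := fun t => (1 - Real.exp (-t)) ^ n with hf
  set g : ℝ → ℝ := fun t => t ^ (b - a) with hg
  set w : ℝ → ℝ := fun t => t ^ (a - 1) * Real.exp (-t) with hw
  have hgw : ∀ t ∈ Set.Ioi (0:ℝ), g t * w t = t ^ (b - 1) * Real.exp (-t) := by
    intro t ht
    have ht' : (0:ℝ) < t := ht
    simp only [hg, hw, ← mul_assoc, ← Real.rpow_add ht']
    rw [show b - a + (a - 1) = b - 1 by ring]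
  have hgw_ae : (fun t => t ^ (b - 1) * Real.exp (-t)) =ᵐ[μ] fun t => g t * w t := by
    refine (ae_restrict_iff' measurableSet_Ioi).2 (ae_of_all _ fun t ht => ?_)
    exact (hgw t ht).symm
  have hfgw_ae : (fun t => f t * (t ^ (b - 1) * Real.exp (-t))) =ᵐ[μ]
      fun t => f t * g t * w t := by
    refine (ae_restrict_iff' measurableSet_Ioi).2 (ae_of_all _ fun t ht => ?_)
    show f t * (t ^ (b - 1) * Real.exp (-t)) = f t * g t * w t
    rw [mul_assoc, hgw t ht]
  have h1 : Integrable w μ := vp_intF ha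
  have h2 : Integrable (fun t => f t * w t) μ := vp_intHF n ha
  have h3 : Integrable (fun t => g t * w t) μ := (vp_intF hb).congr hgw_ae
  have h4 : Integrable (fun t => f t * g t * w t) μ := (vp_intHF n hb).congr hfgw_ae
  have hpos : ∀ᵐ z ∂(μ.prod μ), 0 ≤ (f z.1 - f z.2) * (g z.1 - g z.2) * (w z.1 * w z.2) := by
    rw [hμ, Measure.prod_restrict]
    refine (ae_restrict_iff' (measurableSet_Ioi.prod measurableSet_Ioi)).2
      (ae_of_all _ fun z hz => ?_)
    obtain ⟨hz1, hz2⟩ := Set.mem_prod.1 hz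
    have hz1' : (0:ℝ) < z.1 := hz1
    have hz2' : (0:ℝ) < z.2 := hz2
    have hwpos : 0 ≤ w z.1 * w z.2 := by
      have : 0 ≤ w z.1 := by simp only [hw]; positivity
      have : 0 ≤ w z.2 := by simp only [hw]; positivity
      positivity
    refine mul_nonneg ?_ hwpos
    have hmonof : ∀ s t : ℝ, 0 < s → 0 < t → s ≤ t → f s ≤ f t := by
      intro s t hs ht hst
      simp only [hf]
      refine pow_le_pow_left₀ ?_ ?_ n
      · have : Real.exp (-s) ≤ 1 := Real.exp_le_one_iff.mpr (by linarith)
        linarith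
      · have : Real.exp (-t) ≤ Real.exp (-s) := Real.exp_le_exp.mpr (by linarith)
        linarith
    have hmonog : ∀ s t : ℝ, 0 < s → 0 < t → s ≤ t → g s ≤ g t := by
      intro s t hs ht hst
      exact Real.rpow_le_rpow hs.le hst (by linarith)
    rcases le_total z.1 z.2 with hle | hle
    · have hfle := hmonof z.1 z.2 hz1' hz2' hle
      have hgle := hmonog z.1 z.2 hz1' hz2' hle
      nlinarith [hfle, hgle]
    · have hfle := hmonof z.2 z.1 hz2' hz1' hle
      have hgle := hmonog z.2 z.1 hz2' hz1' hle
      exact mul_nonneg (by linarith) (by linarith)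
  have main := vp_cheb h2 h3 h4 h1 hpos
  have e1 : ∫ t, g t * w t ∂μ = Real.Gamma b := by
    rw [← integral_congr_ae hgw_ae, vp_Gamma_eq hb]
  have e2 : ∫ t, w t ∂μ = Real.Gamma a := vp_Gamma_eq ha
  have e3 : ∫ t, f t * g t * w t ∂μ =
      ∫ t in Set.Ioi 0, (1 - Real.exp (-t)) ^ n * (t ^ (b - 1) * Real.exp (-t)) := by
    rw [← integral_congr_ae hfgw_ae]
  rw [e1, e2, e3] at main
  exact main

end VoronoiAux

/-- Properties of the Voronoi probability
`P_v(a,K) = ∑_{k=0}^{K-1} (-1)^k (K-1 choose k)/(k+1)^a`: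
it lies in `[0,1]` for `a > 0`, tends to `1` as `a → ∞` (fixed `K`), and is
monotone nondecreasing in `a` on `(0, ∞)`. -/
theorem voronoi_probability_properties (K : ℕ) (hK : 1 ≤ K)
    (Pv : ℝ → ℝ)
    (hPv : ∀ a : ℝ, Pv a =
      ∑ k ∈ Finset.range K,
        (-1 : ℝ) ^ k * ((K - 1).choose k : ℝ) / ((k : ℝ) + 1) ^ a) :
    (∀ a : ℝ, 0 < a → Pv a ∈ Set.Icc (0 : ℝ) 1) ∧
      Tendsto Pv atTop (nhds 1) ∧
      (∀ a b : ℝ, 0 < a → a ≤ b → Pv a ≤ Pv b) := by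
  obtain ⟨n, rfl⟩ : ∃ n, K = n + 1 := ⟨K - 1, (Nat.succ_pred_eq_of_pos hK).symm⟩
  have hchoose : ∀ k, ((n + 1 - 1).choose k) = n.choose k := by intro k; norm_num
  have hPv' : ∀ a : ℝ, Pv a =
      ∑ k ∈ Finset.range (n + 1), (-1 : ℝ) ^ k * (n.choose k : ℝ) / ((k : ℝ) + 1) ^ a := by
    intro a
    rw [hPv a]
    refine Finset.sum_congr rfl fun k _ => ?_
    rw [hchoose]
  have hJ : ∀ a : ℝ, 0 < a → Pv a =
      (∫ t in Set.Ioi 0, (1 - Real.exp (-t)) ^ n * (t ^ (a - 1) * Real.exp (-t))) /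
        Real.Gamma a := by
    intro a ha
    rw [vp_J_eq n ha, hPv' a]
    field_simp [(Real.Gamma_pos_of_pos ha).ne']
  refine ⟨?_, ?_, ?_⟩
  · -- bounds
    intro a ha
    have hΓ : 0 < Real.Gamma a := Real.Gamma_pos_of_pos ha
    have hJ0 : 0 ≤ ∫ t in Set.Ioi 0, (1 - Real.exp (-t)) ^ n * (t ^ (a - 1) * Real.exp (-t)) := by
      refine setIntegral_nonneg measurableSet_Ioi fun t ht => ?_
      have ht' : (0:ℝ) < t := ht
      have := vp_H_nonneg n ht'
      positivity
    have hJ1 : (∫ t in Set.Ioi 0, (1 - Real.exp (-t)) ^ n * (t ^ (a - 1) * Real.exp (-t))) ≤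
        Real.Gamma a := by
      rw [← vp_Gamma_eq ha]
      refine setIntegral_mono_on (vp_intHF n ha) (vp_intF ha) measurableSet_Ioi fun t ht => ?_
      have ht' : (0:ℝ) < t := ht
      have hF : 0 ≤ t ^ (a - 1) * Real.exp (-t) := by positivity
      calc (1 - Real.exp (-t)) ^ n * (t ^ (a - 1) * Real.exp (-t))
          ≤ 1 * (t ^ (a - 1) * Real.exp (-t)) :=
            mul_le_mul_of_nonneg_right (vp_H_le_one n ht') hF
        _ = t ^ (a - 1) * Real.exp (-t) := one_mul _
    rw [hJ a ha]
    constructor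
    · positivity
    · rw [div_le_one hΓ]; exact hJ1
  · -- limit
    rw [tendsto_congr hPv']
    have hlim : Tendsto
        (fun a : ℝ => ∑ k ∈ Finset.range (n + 1),
          (-1 : ℝ) ^ k * (n.choose k : ℝ) / ((k : ℝ) + 1) ^ a) atTop
        (nhds (∑ k ∈ Finset.range (n + 1), if k = 0 then (1:ℝ) else 0)) := by
      refine tendsto_finset_sum _ fun k _ => ?_
      rcases Nat.eq_zero_or_pos k with rfl | hk
      · simp only [if_pos rfl]
        refine Tendsto.congr (fun a => ?_) (tendsto_const_nhds (x := (1:ℝ)))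
        simp [Real.one_rpow]
      · have hk' : k ≠ 0 := hk.ne'
        simp only [if_neg hk']
        have hbase : Tendsto (fun a : ℝ => ((1:ℝ) / ((k:ℝ) + 1)) ^ a) atTop (nhds 0) := by
          have hpos01 : (0:ℝ) < 1 / ((k:ℝ) + 1) := by positivity
          refine tendsto_rpow_atTop_of_base_lt_one _ (by linarith) ?_
          rw [div_lt_one (by positivity)]
          have : (1:ℝ) ≤ (k:ℝ) := by exact_mod_cast hk
          linarith
        have : (fun a : ℝ => (-1 : ℝ) ^ k * (n.choose k : ℝ) / ((k : ℝ) + 1) ^ a) =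
            fun a : ℝ => ((-1 : ℝ) ^ k * (n.choose k : ℝ)) * ((1:ℝ) / ((k:ℝ) + 1)) ^ a := by
          funext a
          rw [Real.div_rpow zero_le_one (by positivity), Real.one_rpow]
          ring
        rw [this]
        simpa using hbase.const_mul ((-1 : ℝ) ^ k * (n.choose k : ℝ))
    have hsum : (∑ k ∈ Finset.range (n + 1), if k = 0 then (1:ℝ) else 0) = 1 := by
      rw [Finset.sum_ite_eq' (Finset.range (n + 1)) 0 (fun _ => (1:ℝ))]
      simp
    rwa [hsum] at hlim
  · -- monotone
    intro a b ha hab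
    have hb : 0 < b := lt_of_lt_of_le ha hab
    rw [hJ a ha, hJ b hb,
      div_le_div_iff₀ (Real.Gamma_pos_of_pos ha) (Real.Gamma_pos_of_pos hb)]
    exact vp_mono_step n ha hab
end
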